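/- Let d ≥ 2, 1 ≤ k ≤ d-1, and let m, r_m be as above. Then Σ_{a=0}^{r_m} (⌊r_{a,i}/k⌋ - ⌊a/k⌋ + [{r_{a,i}/k} > {r_m/k}] - [{a/k} > {r_m/k}]) ≥ Σ_{r_{a,i} ∈ A_{i3}} ⌈(r_{a,i} - r_m)/k⌉, where [P] is the indicator of P, r_{a,i} = (pa + u_{b-i}) mod d, and A_{i3} = {r_{a,i} > r_m : 0 ≤ a ≤ r_m}, assuming a ↦ r_{a,i} is a bijection on residues mod d. -/

import Mathlib

lemma frac_div (k s : ℕ) (hk : 1 ≤ k) (hs : s < k) : Int.fract ((s:ℚ)/k) = (s:ℚ)/k := by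
  apply Int.fract_eq_self.2
  refine ⟨by positivity, ?_⟩
  rw [div_lt_one (by positivity)]
  exact_mod_cast hs

lemma key (k r x : ℕ) (hk : 1 ≤ k) :
    (⌊(x:ℚ)/k⌋ : ℚ) + (if Int.fract ((r:ℚ)/k) < Int.fract ((x:ℚ)/k) then (1:ℚ) else 0)
      = (⌈((x:ℚ)-(r:ℚ))/k⌉ : ℚ) + (⌊(r:ℚ)/k⌋ : ℚ) := by
  have hk0 : (0:ℚ) < k := by exact_mod_cast hk
  obtain ⟨q, s, hs, rfl⟩ : ∃ q s : ℕ, s < k ∧ x = k*q + s :=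
    ⟨x / k, x % k, Nat.mod_lt _ hk, (Nat.div_add_mod x k).symm⟩
  obtain ⟨q0, s0, hs0, rfl⟩ : ∃ q s : ℕ, s < k ∧ r = k*q + s :=
    ⟨r / k, r % k, Nat.mod_lt _ hk, (Nat.div_add_mod r k).symm⟩
  have hx : ((k*q + s : ℕ):ℚ)/k = (s:ℚ)/k + (q:ℤ) := by push_cast; field_simp; ring
  have hr : ((k*q0 + s0 : ℕ):ℚ)/k = (s0:ℚ)/k + (q0:ℤ) := by push_cast; field_simp; ring
  have hdiff : (((k*q + s : ℕ):ℚ) - ((k*q0 + s0 : ℕ):ℚ))/k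
      = ((s:ℚ) - s0)/k + (((q:ℤ) - (q0:ℤ) : ℤ):ℚ) := by push_cast; field_simp; ring
  rw [hx, hr, hdiff, Int.fract_add_intCast, Int.fract_add_intCast, Int.floor_add_intCast,
    Int.floor_add_intCast, Int.ceil_add_intCast, frac_div k s hk hs, frac_div k s0 hk hs0]
  have f0 : ∀ t : ℕ, t < k → ⌊(t:ℚ)/k⌋ = 0 :=
    fun t ht => Int.floor_eq_zero_iff.2 ⟨by positivity,
      by rw [div_lt_one hk0]; exact_mod_cast ht⟩
  have hcs : ⌈((s:ℚ) - s0)/k⌉ = if (s0:ℚ)/k < (s:ℚ)/k then (1:ℤ) else 0 := by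
    have hlt : ((s0:ℚ)/k < (s:ℚ)/k) ↔ s0 < s := by
      rw [div_lt_div_iff_of_pos_right hk0]; exact_mod_cast Iff.rfl
    split_ifs with h
    · rw [Int.ceil_eq_iff]
      have hss : s0 < s := hlt.1 h
      have h1 : (s0:ℚ) < s := by exact_mod_cast hss
      have h2 : (s:ℚ) < k := by exact_mod_cast hs
      have h3 : (0:ℚ) ≤ s0 := by positivity
      have h4 : (0:ℚ) < ((s:ℚ) - s0)/k := div_pos (by linarith) hk0
      have h5 : ((s:ℚ) - s0)/k ≤ 1 := by rw [div_le_one hk0]; linarith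
      constructor <;> push_cast <;> linarith
    · rw [Int.ceil_eq_iff]
      have hss : s ≤ s0 := by by_contra hc; exact h (hlt.2 (by omega))
      have h1 : (s:ℚ) ≤ s0 := by exact_mod_cast hss
      have h2 : (s0:ℚ) < k := by exact_mod_cast hs0
      have h3 : (0:ℚ) ≤ s := by positivity
      have h4 : (-1:ℚ) < ((s:ℚ) - s0)/k := by rw [lt_div_iff₀ hk0]; linarith
      have h5 : ((s:ℚ) - s0)/k ≤ 0 :=
        div_nonpos_of_nonpos_of_nonneg (by linarith) (le_of_lt hk0)
      constructor <;> push_cast <;> linarith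
  rw [f0 s hs, f0 s0 hs0, hcs]
  push_cast
  split_ifs <;> push_cast <;> ring


/-- Rearrangement inequality from the comparison of arithmetic polygons:
`Σ_{a=0}^{r_m} (⌊r_{a,i}/k⌋ - ⌊a/k⌋ + [{r_{a,i}/k}>{r_m/k}] - [{a/k}>{r_m/k}])
  ≥ Σ_{x ∈ A_{i3}} ⌈(x - r_m)/k⌉`, where `r_{a,i} = (pa+u') % d`. -/
theorem polygonRearrangement (p d k u' m : ℕ) (hd : 2 ≤ d) (hk1 : 1 ≤ k)
    (hk2 : k ≤ d - 1)
    (hbij : Function.Bijective (fun a : ZMod d => (p : ZMod d) * a + (u' : ZMod d))) :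
    (∑ x ∈ ((Finset.range (m % d + 1)).filter
          (fun a => m % d < (p * a + u') % d)).image (fun a => (p * a + u') % d),
        (⌈((x : ℚ) - ((m % d : ℕ) : ℚ)) / k⌉ : ℚ))
      ≤ ∑ a ∈ Finset.range (m % d + 1),
          ((⌊(((p * a + u') % d : ℕ) : ℚ) / k⌋ : ℚ) - (⌊(a : ℚ) / k⌋ : ℚ)
            + (if Int.fract (((m % d : ℕ) : ℚ) / k)
                  < Int.fract ((((p * a + u') % d : ℕ) : ℚ) / k) then 1 else 0)
            - (if Int.fract (((m % d : ℕ) : ℚ) / k)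
                  < Int.fract ((a : ℚ) / k) then 1 else 0)) := by
  have hd0 : 0 < d := by omega
  set r : ℕ := m % d with hrdef
  have hrd : r < d := Nat.mod_lt _ hd0
  set f : ℕ → ℕ := fun a => (p * a + u') % d with hf
  set F : ℕ → ℚ := fun x => (⌈((x:ℚ) - (r:ℚ))/k⌉ : ℚ) with hF
  -- injectivity of f on range (r+1)
  have hinj : ∀ a ∈ Finset.range (r+1), ∀ b ∈ Finset.range (r+1), f a = f b → a = b := by
    intro a ha b hb hab
    have ha' : a < d := by simp at ha; omega
    have hb' : b < d := by simp at hb; omega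
    have : ((f a : ℕ) : ZMod d) = ((f b : ℕ) : ZMod d) := by rw [hab]
    simp only [hf, ZMod.natCast_mod] at this
    push_cast at this
    have := hbij.injective this
    have h2 : ((a : ZMod d)).val = ((b : ZMod d)).val := by rw [this]
    rwa [ZMod.val_natCast_of_lt ha', ZMod.val_natCast_of_lt hb'] at h2
  -- rewrite each summand as F (f a) - F a
  have hsummand : ∀ a : ℕ,
      ((⌊((f a : ℕ) : ℚ) / k⌋ : ℚ) - (⌊(a : ℚ) / k⌋ : ℚ)
        + (if Int.fract ((r : ℚ) / k) < Int.fract (((f a : ℕ) : ℚ) / k) then (1:ℚ) else 0)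
        - (if Int.fract ((r : ℚ) / k) < Int.fract ((a : ℚ) / k) then (1:ℚ) else 0))
      = F (f a) - F a := by
    intro a
    have h1 := key k r (f a) hk1
    have h2 := key k r a hk1
    simp only [hF]
    linarith
  rw [Finset.sum_congr rfl (fun a _ => hsummand a), Finset.sum_sub_distrib]
  -- LHS as sum over filter
  rw [Finset.sum_image (fun a ha b hb h => hinj a (Finset.mem_filter.1 ha).1
        b (Finset.mem_filter.1 hb).1 h)]
  -- split range sum
  have hsplit := Finset.sum_filter_add_sum_filter_not (Finset.range (r+1))
    (fun a => r < f a) (fun a => F (f a))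
  -- enough: Σ_range F ≤ Σ_{negfilter} F (f a)
  have hmain : ∑ a ∈ Finset.range (r+1), F a
      ≤ ∑ a ∈ (Finset.range (r+1)).filter (fun a => ¬ r < f a), F (f a) := by
    have himg : ∑ x ∈ ((Finset.range (r+1)).filter (fun a => ¬ r < f a)).image f, F x
        = ∑ a ∈ (Finset.range (r+1)).filter (fun a => ¬ r < f a), F (f a) :=
      Finset.sum_image (fun a ha b hb h => hinj a (Finset.mem_filter.1 ha).1
          b (Finset.mem_filter.1 hb).1 h)
    rw [← himg]
    set S := ((Finset.range (r+1)).filter (fun a => ¬ r < f a)).image f with hS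
    have hSsub : S ⊆ Finset.range (r+1) := by
      intro x hx
      simp only [hS, Finset.mem_image, Finset.mem_filter, Finset.mem_range] at hx ⊢
      obtain ⟨a, ⟨_, hle⟩, rfl⟩ := hx
      omega
    have hnonpos : ∀ x ∈ Finset.range (r+1), F x ≤ 0 := by
      intro x hx
      simp only [Finset.mem_range] at hx
      have : ((x:ℚ) - r)/k ≤ 0 := by
        apply div_nonpos_of_nonpos_of_nonneg
        · have : (x:ℚ) ≤ r := by exact_mod_cast Nat.lt_succ_iff.1 hx
          linarith
        · positivity
      simp only [hF]
      exact_mod_cast Int.ceil_le.2 (by exact_mod_cast this)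
    have hsd : ∑ x ∈ Finset.range (r+1) \ S, F x + ∑ x ∈ S, F x
        = ∑ x ∈ Finset.range (r+1), F x := Finset.sum_sdiff hSsub
    have hneg : ∑ x ∈ Finset.range (r+1) \ S, F x ≤ 0 :=
      Finset.sum_nonpos (fun x hx => hnonpos x (Finset.mem_sdiff.1 hx).1)
    linarith
  linarith [hsplit, Finset.sum_le_sum_of_subset_of_nonneg (Finset.filter_subset
    (fun a => r < f a) (Finset.range (r+1))) (fun _ _ _ => le_refl (0:ℚ))]
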